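/- Let X be a q-uniformly convex Banach space (q ≥ 2) and T = P_N ⋯ P_1 a product of orthoprojections. Then the closed convex hull of the Banach-space numerical range of T is a generalised Stolz domain with parameter q^N; in particular every λ in the numerical range satisfies |λ| ≤ 1 and |λ - 1| ≤ C(1 - |λ|)^{1/q^N} for some constant C independent of λ. -/

import Mathlib

/-- In a `q`-uniformly convex Banach space, for a product `T = P_N ⋯ P_1` of orthoprojections,
the closed convex hull of the numerical range of `T` is a generalised Stolz domain with
parameter `q^N`; in particular every `λ` in the numerical range satisfies `|λ| ≤ 1` and
`|λ - 1| ≤ C(1 - |λ|)^{1/q^N}`. -/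
theorem stmt12 {X : Type*} [NormedAddCommGroup X] [NormedSpace ℂ X]
    (q : ℝ) (hq : 2 ≤ q) (c : ℝ) (hc : 0 < c)
    -- `X` is `q`-uniformly convex: `δ_X(ε) ≥ cε^q`
    (huc : ∀ x y : X, ‖x‖ ≤ 1 → ‖y‖ ≤ 1 → c * ‖x - y‖ ^ q ≤ 1 - ‖x + y‖ / 2)
    (N : ℕ) (hN : 1 ≤ N) (P : Fin N → (X →L[ℂ] X))
    (hidem : ∀ k, P k ∘L P k = P k) (hnorm : ∀ k, ‖P k‖ ≤ 1)
    (T : X →L[ℂ] X) (hT : T = (List.ofFn P).reverse.prod)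
    -- an isometric duality selection `J : x ↦ φ_x` with `⟨x, φ_x⟩ = ‖x‖²`
    (J : X → StrongDual ℂ X)
    (hJ1 : ∀ x : X, ‖J x‖ = ‖x‖)
    (hJ2 : ∀ x : X, J x x = (‖x‖ : ℂ) ^ 2)
    -- the numerical range of `T` with respect to `J`
    (W : Set ℂ) (hW : W = {z : ℂ | ∃ x : X, ‖x‖ = 1 ∧ z = J x (T x)}) :
    (∃ C > (0:ℝ), ∀ z ∈ W, ‖z‖ ≤ 1 ∧ ‖z - 1‖ ≤ C * (1 - ‖z‖) ^ (1 / q ^ N)) ∧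
    (∃ c' > (0:ℝ), ∃ ε > (0:ℝ), ∀ z ∈ closure (convexHull ℝ W), ‖z - 1‖ ≤ ε →
      c' * ‖z - 1‖ ^ (q ^ N) ≤ 1 - ‖z‖) := by
  have hq0 : (0:ℝ) < q := lt_of_lt_of_le two_pos hq
  have hq1 : (1:ℝ) ≤ q := le_trans one_le_two hq
  set Q : ℝ := q ^ N with hQdef
  have hQq : q ≤ Q := le_self_pow₀ hq1 (by omega)
  have hQ1 : (1:ℝ) ≤ Q := le_trans hq1 hQq
  have hQ0 : (0:ℝ) < Q := lt_of_lt_of_le one_pos hQ1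
  -- Key estimate for a single orthoprojection
  have keyA : ∀ (A : X →L[ℂ] X), A ∘L A = A → ‖A‖ ≤ 1 → ∀ u : X, ‖u‖ ≤ 1 →
      ‖A u‖ ≤ ‖u‖ ∧ c * ‖u - A u‖ ^ q ≤ ‖u‖ - ‖A u‖ := by
    intro A hA hAn u hu
    have h1 : ‖A u‖ ≤ ‖u‖ := by
      calc ‖A u‖ ≤ ‖A‖ * ‖u‖ := A.le_opNorm u
        _ ≤ 1 * ‖u‖ := mul_le_mul_of_nonneg_right hAn (norm_nonneg u)
        _ = ‖u‖ := one_mul _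
    refine ⟨h1, ?_⟩
    rcases eq_or_lt_of_le (norm_nonneg u) with h0 | hr
    · have hu0 : u = 0 := norm_eq_zero.mp h0.symm
      subst hu0
      simp [Real.zero_rpow (ne_of_gt hq0)]
    · set r := ‖u‖ with hrdef
      have hrne : r ≠ 0 := ne_of_gt hr
      have hAA : A (A u) = A u := by
        have h := congrArg (fun B : X →L[ℂ] X => B u) hA
        simpa using h
      have hmid : 2 * ‖A u‖ ≤ ‖u + A u‖ := by
        have h2 : A (u + A u) = A u + A u := by rw [map_add, hAA]
        have h3 : ‖A (u + A u)‖ ≤ ‖u + A u‖ := by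
          calc ‖A (u + A u)‖ ≤ ‖A‖ * ‖u + A u‖ := A.le_opNorm _
            _ ≤ 1 * ‖u + A u‖ := mul_le_mul_of_nonneg_right hAn (norm_nonneg _)
            _ = ‖u + A u‖ := one_mul _
        rw [h2] at h3
        have : ‖A u + A u‖ = 2 * ‖A u‖ := by
          rw [← two_smul ℂ (A u), norm_smul]
          simp
        linarith [this ▸ h3]
      have hscale : ∀ w : X, ‖((r:ℂ))⁻¹ • w‖ = ‖w‖ / r := by
        intro w
        rw [norm_smul, norm_inv, Complex.norm_real, Real.norm_eq_abs,
          abs_of_pos hr, inv_mul_eq_div]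
      have hx1 : ‖((r:ℂ))⁻¹ • u‖ ≤ 1 := by
        rw [hscale]; rw [div_le_one hr]
      have hy1 : ‖((r:ℂ))⁻¹ • A u‖ ≤ 1 := by
        rw [hscale, div_le_one hr]; exact h1
      have h2 := huc _ _ hx1 hy1
      rw [← smul_sub, ← smul_add, hscale, hscale] at h2
      have hD : ‖u - A u‖ / r = ‖u - A u‖ / r := rfl
      rw [Real.div_rpow (norm_nonneg _) hr.le] at h2
      -- h2 : c * (‖u - A u‖ ^ q / r ^ q) ≤ 1 - ‖u + A u‖ / r / 2
      have hrq : (0:ℝ) < r ^ q := Real.rpow_pos_of_pos hr q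
      have hrqr : r ^ q ≤ r := by
        have := Real.rpow_le_rpow_of_exponent_ge hr hu hq1
        rwa [Real.rpow_one] at this
      have hsr : ‖A u‖ / r ≤ 1 := by rw [div_le_one hr]; exact h1
      have h4 : 1 - ‖u + A u‖ / r / 2 ≤ 1 - ‖A u‖ / r := by
        have : 2 * ‖A u‖ / r ≤ ‖u + A u‖ / r := div_le_div_of_nonneg_right hmid hr.le
        rw [mul_div_assoc] at this
        linarith
      have h5 : c * ‖u - A u‖ ^ q / r ^ q ≤ 1 - ‖A u‖ / r := by
        rw [mul_div_assoc]; linarith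
      have h6 : c * ‖u - A u‖ ^ q ≤ (1 - ‖A u‖ / r) * r ^ q :=
        (div_le_iff₀ hrq).mp h5
      have h7 : (1 - ‖A u‖ / r) * r ^ q ≤ (1 - ‖A u‖ / r) * r :=
        mul_le_mul_of_nonneg_left hrqr (by linarith)
      have h8 : (1 - ‖A u‖ / r) * r = r - ‖A u‖ := by field_simp
      linarith
  -- Telescoping estimate for a product
  have keyB : ∀ L : List (X →L[ℂ] X), (∀ A ∈ L, A ∘L A = A ∧ ‖A‖ ≤ 1) →
      ∀ u : X, ‖u‖ ≤ 1 → ‖L.prod u‖ ≤ ‖u‖ ∧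
        ‖u - L.prod u‖ ≤ (L.length : ℝ) * ((‖u‖ - ‖L.prod u‖) / c) ^ (1/q) := by
    intro L
    induction L with
    | nil => intro _ u hu; simp
    | cons a l ih =>
      intro hmem u hu
      obtain ⟨ha1, ha2⟩ := hmem a List.mem_cons_self
      obtain ⟨ih1, ih2⟩ := ih (fun A hA => hmem A (List.mem_cons_of_mem a hA)) u hu
      have hprod : (a :: l).prod u = a (l.prod u) := by
        rw [List.prod_cons]; rfl
      set v := l.prod u with hv
      obtain ⟨hA1, hA2⟩ := keyA a ha1 ha2 v (le_trans ih1 hu)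
      have hav_u : ‖a v‖ ≤ ‖u‖ := le_trans hA1 ih1
      constructor
      · rw [hprod]; exact hav_u
      · rw [hprod]
        set D : ℝ := ((‖u‖ - ‖a v‖) / c) ^ (1/q) with hDdef
        have hnum : (0:ℝ) ≤ (‖u‖ - ‖a v‖) / c := div_nonneg (by linarith) hc.le
        have hD0 : (0:ℝ) ≤ D := Real.rpow_nonneg hnum _
        have hstep : ‖v - a v‖ ≤ D := by
          have hs : ‖v - a v‖ ^ q ≤ (‖u‖ - ‖a v‖) / c := by
            rw [le_div_iff₀ hc]; nlinarith [hA2]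
          have hid : (‖v - a v‖ ^ q) ^ (1/q) = ‖v - a v‖ := by
            rw [← Real.rpow_mul (norm_nonneg _), mul_one_div,
              div_self (ne_of_gt hq0), Real.rpow_one]
          calc ‖v - a v‖ = (‖v - a v‖ ^ q) ^ (1/q) := hid.symm
            _ ≤ D := Real.rpow_le_rpow (Real.rpow_nonneg (norm_nonneg _) _) hs
                (by positivity)
        have hprev : ‖u - v‖ ≤ (l.length : ℝ) * D := by
          refine le_trans ih2 (mul_le_mul_of_nonneg_left ?_ (Nat.cast_nonneg _))
          exact Real.rpow_le_rpow (div_nonneg (by linarith) hc.le)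
            (div_le_div_of_nonneg_right (by linarith) hc.le) (by positivity)
        have htri : ‖u - a v‖ ≤ ‖u - v‖ + ‖v - a v‖ := by
          have heq : u - a v = (u - v) + (v - a v) := by abel
          rw [heq]; exact norm_add_le _ _
        have hlen : ((a :: l).length : ℝ) = (l.length : ℝ) + 1 := by
          simp
        rw [hlen]
        calc ‖u - a v‖ ≤ ‖u - v‖ + ‖v - a v‖ := htri
          _ ≤ (l.length : ℝ) * D + D := add_le_add hprev hstep
          _ = ((l.length : ℝ) + 1) * D := by ring
  -- membership facts for the list of projections
  set L : List (X →L[ℂ] X) := (List.ofFn P).reverse with hLdef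
  have hLmem : ∀ A ∈ L, A ∘L A = A ∧ ‖A‖ ≤ 1 := by
    intro A hA
    rw [hLdef, List.mem_reverse, List.mem_ofFn] at hA
    obtain ⟨k, rfl⟩ := hA
    exact ⟨hidem k, hnorm k⟩
  have hLlen : (L.length : ℝ) = (N : ℝ) := by simp [hLdef]
  -- The constant
  set C : ℝ := (N : ℝ) / c ^ (1/q) with hCdef
  have hcq : (0:ℝ) < c ^ (1/q) := Real.rpow_pos_of_pos hc _
  have hC0 : (0:ℝ) < C := div_pos (by exact_mod_cast hN) hcq
  -- Part 1
  have hpart1 : ∀ z ∈ W, ‖z‖ ≤ 1 ∧ ‖z - 1‖ ≤ C * (1 - ‖z‖) ^ (1/Q) := by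
    intro z hz
    rw [hW] at hz
    obtain ⟨x, hx, rfl⟩ := hz
    obtain ⟨hTle, hTdiff⟩ := keyB L hLmem x (le_of_eq hx)
    rw [← hT] at hTle hTdiff
    rw [hx] at hTle hTdiff
    have hJx : ‖J x‖ = 1 := by rw [hJ1, hx]
    have hzle : ‖(J x) (T x)‖ ≤ ‖T x‖ := by
      calc ‖(J x) (T x)‖ ≤ ‖J x‖ * ‖T x‖ := (J x).le_opNorm _
        _ = ‖T x‖ := by rw [hJx, one_mul]
    have hz1 : ‖(J x) (T x)‖ ≤ 1 := le_trans hzle hTle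
    refine ⟨hz1, ?_⟩
    -- bound on |z - 1|
    have hone : (J x) x = 1 := by
      rw [hJ2, hx]; norm_num
    have hzsub : (J x) (T x) - 1 = -((J x) (x - T x)) := by
      rw [map_sub, hone]; ring
    have hd1 : ‖(J x) (T x) - 1‖ ≤ ‖x - T x‖ := by
      rw [hzsub, norm_neg]
      calc ‖(J x) (x - T x)‖ ≤ ‖J x‖ * ‖x - T x‖ := (J x).le_opNorm _
        _ = ‖x - T x‖ := by rw [hJx, one_mul]
    have hnn : (0:ℝ) ≤ 1 - ‖(J x) (T x)‖ := by linarith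
    have hmono : ((1 - ‖T x‖) / c) ^ (1/q) ≤ ((1 - ‖(J x) (T x)‖) / c) ^ (1/q) := by
      refine Real.rpow_le_rpow (div_nonneg (by linarith) hc.le)
        (div_le_div_of_nonneg_right (by linarith) hc.le) (by positivity)
    have hchain : ‖(J x) (T x) - 1‖ ≤ (N : ℝ) * ((1 - ‖(J x) (T x)‖) / c) ^ (1/q) := by
      calc ‖(J x) (T x) - 1‖ ≤ ‖x - T x‖ := hd1
        _ ≤ (N : ℝ) * ((1 - ‖T x‖) / c) ^ (1/q) := by rw [← hLlen]; exact hTdiff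
        _ ≤ (N : ℝ) * ((1 - ‖(J x) (T x)‖) / c) ^ (1/q) :=
            mul_le_mul_of_nonneg_left hmono (Nat.cast_nonneg _)
    have hrw : (N : ℝ) * ((1 - ‖(J x) (T x)‖) / c) ^ (1/q)
        = C * (1 - ‖(J x) (T x)‖) ^ (1/q) := by
      rw [Real.div_rpow hnn hc.le, hCdef]; ring
    have hbump : (1 - ‖(J x) (T x)‖) ^ (1/q) ≤ (1 - ‖(J x) (T x)‖) ^ (1/Q) := by
      rcases eq_or_lt_of_le hnn with h0 | hpos
      · rw [← h0, Real.zero_rpow (by positivity : (1:ℝ)/q ≠ 0),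
          Real.zero_rpow (by positivity : (1:ℝ)/Q ≠ 0)]
      · exact Real.rpow_le_rpow_of_exponent_ge hpos (by linarith [norm_nonneg ((J x) (T x))])
          (one_div_le_one_div_of_le hq0 hQq)
    calc ‖(J x) (T x) - 1‖ ≤ C * (1 - ‖(J x) (T x)‖) ^ (1/q) := by
          rw [← hrw]; exact hchain
      _ ≤ C * (1 - ‖(J x) (T x)‖) ^ (1/Q) :=
          mul_le_mul_of_nonneg_left hbump hC0.le
  refine ⟨⟨C, hC0, fun z hz => by
    have := hpart1 z hz
    exact ⟨this.1, by rw [one_div]; rw [one_div] at this; exact this.2⟩⟩, ?_⟩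
  -- Part 2
  set CQ : ℝ := C ^ Q with hCQdef
  have hCQ0 : (0:ℝ) < CQ := Real.rpow_pos_of_pos hC0 Q
  have hWQ : ∀ z ∈ W, ‖z - 1‖ ^ Q ≤ CQ * (1 - ‖z‖) := by
    intro z hz
    obtain ⟨h1, h2⟩ := hpart1 z hz
    have hnn : (0:ℝ) ≤ 1 - ‖z‖ := by linarith
    calc ‖z - 1‖ ^ Q ≤ (C * (1 - ‖z‖) ^ (1/Q)) ^ Q :=
        Real.rpow_le_rpow (norm_nonneg _) h2 hQ0.le
      _ = C ^ Q * ((1 - ‖z‖) ^ (1/Q)) ^ Q :=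
        Real.mul_rpow hC0.le (Real.rpow_nonneg hnn _)
      _ = CQ * (1 - ‖z‖) := by
        rw [← Real.rpow_mul hnn, one_div, inv_mul_cancel₀ (ne_of_gt hQ0),
          Real.rpow_one]
  set S : Set ℂ := {z : ℂ | ‖z - 1‖ ^ Q ≤ CQ * (1 - ‖z‖)} with hSdef
  have hSconv : Convex ℝ S := by
    intro z1 hz1 z2 hz2 a b ha hb hab
    simp only [hSdef, Set.mem_setOf_eq] at hz1 hz2 ⊢
    have hone : a • (1:ℂ) + b • (1:ℂ) = 1 := by
      rw [← add_smul, hab, one_smul]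
    have key0 : a • z1 + b • z2 - 1 = a • (z1 - 1) + b • (z2 - 1) := by
      calc a • z1 + b • z2 - 1 = a • z1 + b • z2 - (a • (1:ℂ) + b • (1:ℂ)) := by
            rw [hone]
        _ = a • (z1 - 1) + b • (z2 - 1) := by rw [smul_sub, smul_sub]; abel
    have hnorm_smul : ∀ (t : ℝ) (w : ℂ), 0 ≤ t → ‖t • w‖ = t * ‖w‖ := by
      intro t w ht
      rw [norm_smul, Real.norm_eq_abs, abs_of_nonneg ht]
    have hbound : ‖a • z1 + b • z2 - 1‖ ≤ a * ‖z1 - 1‖ + b * ‖z2 - 1‖ := by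
      rw [key0]
      calc ‖a • (z1 - 1) + b • (z2 - 1)‖ ≤ ‖a • (z1 - 1)‖ + ‖b • (z2 - 1)‖ :=
          norm_add_le _ _
        _ = a * ‖z1 - 1‖ + b * ‖z2 - 1‖ := by
          rw [hnorm_smul a _ ha, hnorm_smul b _ hb]
    have hconvpow := (convexOn_rpow hQ1).2 (Set.mem_Ici.mpr (norm_nonneg (z1 - 1)))
      (Set.mem_Ici.mpr (norm_nonneg (z2 - 1))) ha hb hab
    simp only [smul_eq_mul] at hconvpow
    have hnsum : ‖a • z1 + b • z2‖ ≤ a * ‖z1‖ + b * ‖z2‖ := by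
      calc ‖a • z1 + b • z2‖ ≤ ‖a • z1‖ + ‖b • z2‖ := norm_add_le _ _
        _ = a * ‖z1‖ + b * ‖z2‖ := by
          rw [hnorm_smul a _ ha, hnorm_smul b _ hb]
    calc ‖a • z1 + b • z2 - 1‖ ^ Q ≤ (a * ‖z1 - 1‖ + b * ‖z2 - 1‖) ^ Q :=
        Real.rpow_le_rpow (norm_nonneg _) hbound hQ0.le
      _ ≤ a * ‖z1 - 1‖ ^ Q + b * ‖z2 - 1‖ ^ Q := hconvpow
      _ ≤ a * (CQ * (1 - ‖z1‖)) + b * (CQ * (1 - ‖z2‖)) :=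
        add_le_add (mul_le_mul_of_nonneg_left hz1 ha)
          (mul_le_mul_of_nonneg_left hz2 hb)
      _ = CQ * (1 - (a * ‖z1‖ + b * ‖z2‖)) := by linear_combination CQ * hab
      _ ≤ CQ * (1 - ‖a • z1 + b • z2‖) :=
        mul_le_mul_of_nonneg_left (by linarith) hCQ0.le
  have hSclosed : IsClosed S := by
    have hf : Continuous fun z : ℂ => ‖z - 1‖ ^ Q :=
      ((continuous_id.sub continuous_const).norm).rpow_const (fun z => Or.inr hQ0.le)
    have hg : Continuous fun z : ℂ => CQ * (1 - ‖z‖) :=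
      continuous_const.mul (continuous_const.sub continuous_norm)
    exact isClosed_le hf hg
  have hsub : W ⊆ S := fun z hz => hWQ z hz
  have hcl : closure (convexHull ℝ W) ⊆ S :=
    closure_minimal (convexHull_min hsub hSconv) hSclosed
  refine ⟨CQ⁻¹, inv_pos.mpr hCQ0, 1, one_pos, fun z hz _ => ?_⟩
  have hzS := hcl hz
  simp only [hSdef, Set.mem_setOf_eq] at hzS
  calc CQ⁻¹ * ‖z - 1‖ ^ Q ≤ CQ⁻¹ * (CQ * (1 - ‖z‖)) :=
      mul_le_mul_of_nonneg_left hzS (inv_nonneg.mpr hCQ0.le)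
    _ = 1 - ‖z‖ := by
      rw [← mul_assoc, inv_mul_cancel₀ (ne_of_gt hCQ0), one_mul]
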